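/- Let Δ_a be the fan in Z^3 with maximal cones Cone(e1,e3,f1,f2) and Cone(e2,e4,f1,f2), where e1=(1,0,0), e2=(0,1,0), e3=(0,0,1), e4=(1,1,-1), f1=(3,1,-2), f2=(-1,1,2). Then neither maximal cone is simplicial, and each maximal cone has exactly four extremal rays, generated respectively by {e1,e3,f1,f2} and {e2,e4,f1,f2}. -/

import Mathlib

/-- The convex cone generated by finitely many vectors in `ℝ³`. -/
def coneOf {k : ℕ} (v : Fin k → (Fin 3 → ℝ)) : Set (Fin 3 → ℝ) :=
  {x | ∃ c : Fin k → ℝ, (∀ i, 0 ≤ c i) ∧ x = ∑ i, c i • v i}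

/-- `F` is a face of the cone `σ`. -/
def IsFaceOf (F σ : Set (Fin 3 → ℝ)) : Prop :=
  F ⊆ σ ∧ (∀ x ∈ F, ∀ t : ℝ, 0 ≤ t → t • x ∈ F) ∧
    (∀ x ∈ F, ∀ y ∈ F, x + y ∈ F) ∧
    ∀ x ∈ σ, ∀ y ∈ σ, x + y ∈ F → x ∈ F ∧ y ∈ F

/-- The ray spanned by a vector. -/
def ray (v : Fin 3 → ℝ) : Set (Fin 3 → ℝ) := {x | ∃ t : ℝ, 0 ≤ t ∧ x = t • v}

/-- An extremal ray of `σ`: a one-dimensional face. -/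
def IsExtremalRay (σ R : Set (Fin 3 → ℝ)) : Prop :=
  IsFaceOf R σ ∧ ∃ v, v ≠ 0 ∧ R = ray v

/-- A cone is simplicial if it is generated by linearly independent vectors. -/
def IsSimplicial (σ : Set (Fin 3 → ℝ)) : Prop :=
  ∃ (k : ℕ) (v : Fin k → (Fin 3 → ℝ)), LinearIndependent ℝ v ∧ σ = coneOf v

noncomputable def e1 : Fin 3 → ℝ := ![1,0,0]
noncomputable def e2 : Fin 3 → ℝ := ![0,1,0]
noncomputable def e3 : Fin 3 → ℝ := ![0,0,1]
noncomputable def e4 : Fin 3 → ℝ := ![1,1,-1]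
noncomputable def f1 : Fin 3 → ℝ := ![3,1,-2]
noncomputable def f2 : Fin 3 → ℝ := ![-1,1,2]

namespace Stmt15Aux

/-! ### Basic cone lemmas -/

lemma coneOf_zero {k} (g : Fin k → (Fin 3 → ℝ)) : (0 : Fin 3 → ℝ) ∈ coneOf g :=
  ⟨0, fun _ => le_refl 0, by simp⟩

lemma coneOf_add {k} {g : Fin k → (Fin 3 → ℝ)} {x y : Fin 3 → ℝ}
    (hx : x ∈ coneOf g) (hy : y ∈ coneOf g) : x + y ∈ coneOf g := by
  obtain ⟨c, hc, rfl⟩ := hx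
  obtain ⟨d, hd, rfl⟩ := hy
  exact ⟨c + d, fun i => add_nonneg (hc i) (hd i), by
    simp [add_smul, Finset.sum_add_distrib]⟩

lemma coneOf_smul {k} {g : Fin k → (Fin 3 → ℝ)} {t : ℝ} (ht : 0 ≤ t) {x : Fin 3 → ℝ}
    (hx : x ∈ coneOf g) : t • x ∈ coneOf g := by
  obtain ⟨c, hc, rfl⟩ := hx
  exact ⟨fun i => t * c i, fun i => mul_nonneg ht (hc i), by
    rw [Finset.smul_sum]; exact Finset.sum_congr rfl fun i _ => by rw [smul_smul]⟩

lemma gen_mem {k} (g : Fin k → (Fin 3 → ℝ)) (i : Fin k) : g i ∈ coneOf g := by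
  refine ⟨fun j => if j = i then 1 else 0, fun j => by positivity, ?_⟩
  rw [Finset.sum_eq_single i]
  · simp
  · intro b _ hb; simp [hb]
  · simp

/-! ### Ray lemmas -/

lemma zero_mem_ray (v : Fin 3 → ℝ) : (0 : Fin 3 → ℝ) ∈ ray v :=
  ⟨0, le_refl 0, (zero_smul ℝ v).symm⟩

lemma mem_ray_self (v : Fin 3 → ℝ) : v ∈ ray v := ⟨1, zero_le_one, (one_smul ℝ v).symm⟩

lemma ray_add {v x y : Fin 3 → ℝ} (hx : x ∈ ray v) (hy : y ∈ ray v) : x + y ∈ ray v := by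
  obtain ⟨s, hs, rfl⟩ := hx
  obtain ⟨t, ht, rfl⟩ := hy
  exact ⟨s + t, add_nonneg hs ht, (add_smul s t v).symm⟩

lemma ray_smul {v x : Fin 3 → ℝ} {t : ℝ} (ht : 0 ≤ t) (hx : x ∈ ray v) : t • x ∈ ray v := by
  obtain ⟨s, hs, rfl⟩ := hx
  exact ⟨t * s, mul_nonneg ht hs, smul_smul t s v⟩

lemma ray_smul_pos {v : Fin 3 → ℝ} {r : ℝ} (hr : 0 < r) : ray (r • v) = ray v := by
  ext x
  constructor
  · rintro ⟨t, ht, rfl⟩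
    exact ⟨t * r, mul_nonneg ht hr.le, smul_smul t r v⟩
  · rintro ⟨t, ht, rfl⟩
    refine ⟨t / r, div_nonneg ht hr.le, ?_⟩
    rw [smul_smul, div_mul_cancel₀ _ hr.ne']

lemma ray_ne {u w : Fin 3 → ℝ} (h : ∀ t : ℝ, 0 ≤ t → u ≠ t • w) : ray u ≠ ray w := by
  intro he
  have hu : u ∈ ray w := he ▸ mem_ray_self u
  obtain ⟨t, ht, hte⟩ := hu
  exact h t ht hte

/-! ### Sums in closed sets, face splitting -/

lemma sum_mem_set {σ : Set (Fin 3 → ℝ)} (h0 : (0 : Fin 3 → ℝ) ∈ σ)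
    (hadd : ∀ x ∈ σ, ∀ y ∈ σ, x + y ∈ σ) {ι : Type*} (s : Finset ι)
    (f : ι → (Fin 3 → ℝ)) (hf : ∀ i ∈ s, f i ∈ σ) : ∑ i ∈ s, f i ∈ σ := by
  induction s using Finset.cons_induction with
  | empty => simpa using h0
  | cons a s ha ih =>
    rw [Finset.sum_cons]
    exact hadd _ (hf a (Finset.mem_cons_self a s)) _
      (ih fun j hj => hf j (Finset.mem_cons_of_mem hj))

lemma face_split {σ F : Set (Fin 3 → ℝ)} (hF : IsFaceOf F σ)
    (h0 : (0 : Fin 3 → ℝ) ∈ σ) (hadd : ∀ x ∈ σ, ∀ y ∈ σ, x + y ∈ σ)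
    {ι : Type*} (s : Finset ι) (f : ι → (Fin 3 → ℝ)) (hf : ∀ i ∈ s, f i ∈ σ)
    (hs : ∑ i ∈ s, f i ∈ F) : ∀ i ∈ s, f i ∈ F := by
  induction s using Finset.cons_induction with
  | empty => simp
  | cons a s ha ih =>
    rw [Finset.sum_cons] at hs
    have hsσ : ∑ i ∈ s, f i ∈ σ :=
      sum_mem_set h0 hadd s f fun j hj => hf j (Finset.mem_cons_of_mem hj)
    have h2 := hF.2.2.2 (f a) (hf a (Finset.mem_cons_self a s)) _ hsσ hs
    intro i hi
    rcases Finset.mem_cons.mp hi with rfl | hi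
    · exact h2.1
    · exact ih (fun j hj => hf j (Finset.mem_cons_of_mem hj)) h2.2 i hi

/-! ### Linear functionals -/

noncomputable def dotL (n : Fin 3 → ℝ) : (Fin 3 → ℝ) →ₗ[ℝ] ℝ where
  toFun x := n 0 * x 0 + n 1 * x 1 + n 2 * x 2
  map_add' x y := by simp only [Pi.add_apply]; ring
  map_smul' t x := by simp only [Pi.smul_apply, smul_eq_mul, RingHom.id_apply]; ring

@[simp] lemma dotL_apply (n x : Fin 3 → ℝ) :
    dotL n x = n 0 * x 0 + n 1 * x 1 + n 2 * x 2 := rfl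

lemma dot_nonneg_on_cone {k} {g : Fin k → (Fin 3 → ℝ)} {n : Fin 3 → ℝ}
    (hn : ∀ i, 0 ≤ dotL n (g i)) {x : Fin 3 → ℝ} (hx : x ∈ coneOf g) :
    0 ≤ dotL n x := by
  obtain ⟨c, hc, rfl⟩ := hx
  rw [map_sum]
  exact Finset.sum_nonneg fun i _ => by
    rw [map_smul, smul_eq_mul]; exact mul_nonneg (hc i) (hn i)

/-! ### Extremality from two supporting normals -/

lemma mem_ray_of_kers {k} {g : Fin k → (Fin 3 → ℝ)} {i0 : Fin k}
    (n1 n2 : Fin 3 → ℝ)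
    (h1 : ∀ i, 0 ≤ dotL n1 (g i)) (h2 : ∀ i, 0 ≤ dotL n2 (g i))
    (hker : ∀ i, dotL n1 (g i) = 0 → dotL n2 (g i) = 0 → g i ∈ ray (g i0))
    {x : Fin 3 → ℝ} (hx : x ∈ coneOf g) (hx1 : dotL n1 x = 0) (hx2 : dotL n2 x = 0) :
    x ∈ ray (g i0) := by
  obtain ⟨c, hc, rfl⟩ := hx
  have key : ∀ n : Fin 3 → ℝ, (∀ i, 0 ≤ dotL n (g i)) →
      dotL n (∑ i, c i • g i) = 0 → ∀ i, c i ≠ 0 → dotL n (g i) = 0 := by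
    intro n hn hz i hci
    rw [map_sum] at hz
    simp only [map_smul, smul_eq_mul] at hz
    have hterm := (Finset.sum_eq_zero_iff_of_nonneg
      (fun i _ => mul_nonneg (hc i) (hn i))).mp hz i (Finset.mem_univ i)
    rcases mul_eq_zero.mp hterm with h | h
    · exact absurd h hci
    · exact h
  refine sum_mem_set (zero_mem_ray _) (fun a ha b hb => ray_add ha hb) _ _ ?_
  intro i _
  by_cases hci : c i = 0
  · simpa [hci] using zero_mem_ray (g i0)
  · exact ray_smul (hc i) (hker i (key n1 h1 hx1 i hci) (key n2 h2 hx2 i hci))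

lemma extremal_of_normals {k} {g : Fin k → (Fin 3 → ℝ)} {i0 : Fin k}
    (hg0 : g i0 ≠ 0) (n1 n2 : Fin 3 → ℝ)
    (h1 : ∀ i, 0 ≤ dotL n1 (g i)) (h2 : ∀ i, 0 ≤ dotL n2 (g i))
    (hz1 : dotL n1 (g i0) = 0) (hz2 : dotL n2 (g i0) = 0)
    (hker : ∀ i, dotL n1 (g i) = 0 → dotL n2 (g i) = 0 → g i ∈ ray (g i0)) :
    IsExtremalRay (coneOf g) (ray (g i0)) := by
  have hsub : ray (g i0) ⊆ coneOf g := by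
    rintro x ⟨t, ht, rfl⟩
    exact coneOf_smul ht (gen_mem g i0)
  refine ⟨⟨hsub, ?_, fun x hx y hy => ray_add hx hy, ?_⟩, g i0, hg0, rfl⟩
  · intro x hx t ht
    exact ray_smul ht hx
  · intro x hx y hy hxy
    obtain ⟨t, ht, hxyeq⟩ := hxy
    have key : ∀ n : Fin 3 → ℝ, (∀ i, 0 ≤ dotL n (g i)) → dotL n (g i0) = 0 →
        dotL n x = 0 ∧ dotL n y = 0 := by
      intro n hn hz
      have hsum : dotL n x + dotL n y = 0 := by
        have : dotL n (x + y) = 0 := by rw [hxyeq, map_smul, hz, smul_eq_mul, mul_zero]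
        rwa [map_add] at this
      have hx0 := dot_nonneg_on_cone hn hx
      have hy0 := dot_nonneg_on_cone hn hy
      constructor <;> linarith
    obtain ⟨hx1, hy1⟩ := key n1 h1 hz1
    obtain ⟨hx2, hy2⟩ := key n2 h2 hz2
    exact ⟨mem_ray_of_kers n1 n2 h1 h2 hker hx hx1 hx2,
      mem_ray_of_kers n1 n2 h1 h2 hker hy hy1 hy2⟩

/-! ### Every extremal ray is generated by one of the generators -/

lemma extremalRay_sub {k} {g : Fin k → (Fin 3 → ℝ)} {R : Set (Fin 3 → ℝ)}
    (hR : IsExtremalRay (coneOf g) R) : ∃ i, g i ≠ 0 ∧ R = ray (g i) := by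
  obtain ⟨hface, w, hw0, rfl⟩ := hR
  have hwmem : w ∈ ray w := mem_ray_self w
  have hwσ : w ∈ coneOf g := hface.1 hwmem
  obtain ⟨c, hc, hweq⟩ := hwσ
  have hsplit : ∀ i ∈ Finset.univ, c i • g i ∈ ray w :=
    face_split hface (coneOf_zero g) (fun a ha b hb => coneOf_add ha hb)
      Finset.univ (fun i => c i • g i) (fun i _ => coneOf_smul (hc i) (gen_mem g i))
      (hweq ▸ hwmem)
  have hex : ∃ i ∈ Finset.univ, c i • g i ≠ (0 : Fin 3 → ℝ) := by
    apply Finset.exists_ne_zero_of_sum_ne_zero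
    rw [← hweq]; exact hw0
  obtain ⟨i, _, hne⟩ := hex
  have hci : c i ≠ 0 := fun h => hne (by simp [h])
  have hgi : g i ≠ 0 := fun h => hne (by simp [h])
  obtain ⟨t, ht, hteq⟩ := hsplit i (Finset.mem_univ i)
  -- c i • g i = t • w
  have hgieq : g i = (t / c i) • w := by
    have : (c i)⁻¹ • (c i • g i) = (c i)⁻¹ • (t • w) := by rw [hteq]
    rwa [smul_smul, smul_smul, inv_mul_cancel₀ hci, one_smul, inv_mul_eq_div] at this
  have htpos : 0 < t / c i := by
    rcases lt_or_eq_of_le (div_nonneg ht (hc i)) with h | h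
    · exact h
    · exfalso; apply hgi; rw [hgieq, ← h, zero_smul]
  refine ⟨i, hgi, ?_⟩
  rw [hgieq, ray_smul_pos htpos]

/-! ### Non-simpliciality -/

lemma not_simplicial {g : Fin 4 → (Fin 3 → ℝ)}
    (hex : ∀ j, IsExtremalRay (coneOf g) (ray (g j)))
    (hne : ∀ j j' : Fin 4, ray (g j) = ray (g j') → j = j') :
    ¬ IsSimplicial (coneOf g) := by
  rintro ⟨k, w, hw, hσ⟩
  have hmap : ∀ j : Fin 4, ∃ i : Fin k, ray (g j) = ray (w i) := by
    intro j
    have h := hex j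
    rw [hσ] at h
    obtain ⟨i, _, heq⟩ := extremalRay_sub h
    exact ⟨i, heq⟩
  choose φ hφ using hmap
  have hinj : Function.Injective φ := by
    intro j j' h
    apply hne
    rw [hφ j, hφ j', h]
  have h4 : (4 : ℕ) ≤ k := by
    have := Fintype.card_le_of_injective φ hinj
    simpa using this
  have h3 : k ≤ 3 := by
    have := hw.fintype_card_le_finrank
    rwa [Module.finrank_fin_fun, Fintype.card_fin] at this
  omega


lemma exA0 : IsExtremalRay (coneOf ![e1, e3, f1, f2]) (ray e1) := by
  show IsExtremalRay (coneOf ![e1, e3, f1, f2]) (ray (![e1, e3, f1, f2] 0))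
  refine extremal_of_normals ?_ ![0,1,0] ![0,2,1] ?_ ?_ ?_ ?_ ?_
  · intro h
    have := congrFun h 0
    norm_num [e1, e2, e3, e4, f1, f2, Matrix.cons_val_two, Matrix.cons_val_three] at this
  · intro i; fin_cases i <;> norm_num [dotL_apply, e1, e2, e3, e4, f1, f2, Matrix.cons_val_two, Matrix.cons_val_three]
  · intro i; fin_cases i <;> norm_num [dotL_apply, e1, e2, e3, e4, f1, f2, Matrix.cons_val_two, Matrix.cons_val_three]
  · norm_num [dotL_apply, e1, e2, e3, e4, f1, f2, Matrix.cons_val_two, Matrix.cons_val_three]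
  · norm_num [dotL_apply, e1, e2, e3, e4, f1, f2, Matrix.cons_val_two, Matrix.cons_val_three]
  · intro i
    fin_cases i <;> norm_num [dotL_apply, e1, e2, e3, e4, f1, f2, Matrix.cons_val_two, Matrix.cons_val_three] <;>
      exact mem_ray_self _

lemma exA1 : IsExtremalRay (coneOf ![e1, e3, f1, f2]) (ray e3) := by
  show IsExtremalRay (coneOf ![e1, e3, f1, f2]) (ray (![e1, e3, f1, f2] 1))
  refine extremal_of_normals ?_ ![0,1,0] ![1,1,0] ?_ ?_ ?_ ?_ ?_
  · intro h
    have := congrFun h 2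
    norm_num [e1, e2, e3, e4, f1, f2, Matrix.cons_val_two, Matrix.cons_val_three] at this
  · intro i; fin_cases i <;> norm_num [dotL_apply, e1, e2, e3, e4, f1, f2, Matrix.cons_val_two, Matrix.cons_val_three]
  · intro i; fin_cases i <;> norm_num [dotL_apply, e1, e2, e3, e4, f1, f2, Matrix.cons_val_two, Matrix.cons_val_three]
  · norm_num [dotL_apply, e1, e2, e3, e4, f1, f2, Matrix.cons_val_two, Matrix.cons_val_three]
  · norm_num [dotL_apply, e1, e2, e3, e4, f1, f2, Matrix.cons_val_two, Matrix.cons_val_three]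
  · intro i
    fin_cases i <;> norm_num [dotL_apply, e1, e2, e3, e4, f1, f2, Matrix.cons_val_two, Matrix.cons_val_three] <;>
      exact mem_ray_self _

lemma exA2 : IsExtremalRay (coneOf ![e1, e3, f1, f2]) (ray f1) := by
  show IsExtremalRay (coneOf ![e1, e3, f1, f2]) (ray (![e1, e3, f1, f2] 2))
  refine extremal_of_normals ?_ ![1,-1,1] ![0,2,1] ?_ ?_ ?_ ?_ ?_
  · intro h
    have := congrFun h 0
    norm_num [e1, e2, e3, e4, f1, f2, Matrix.cons_val_two, Matrix.cons_val_three] at this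
  · intro i; fin_cases i <;> norm_num [dotL_apply, e1, e2, e3, e4, f1, f2, Matrix.cons_val_two, Matrix.cons_val_three]
  · intro i; fin_cases i <;> norm_num [dotL_apply, e1, e2, e3, e4, f1, f2, Matrix.cons_val_two, Matrix.cons_val_three]
  · norm_num [dotL_apply, e1, e2, e3, e4, f1, f2, Matrix.cons_val_two, Matrix.cons_val_three]
  · norm_num [dotL_apply, e1, e2, e3, e4, f1, f2, Matrix.cons_val_two, Matrix.cons_val_three]
  · intro i
    fin_cases i <;> norm_num [dotL_apply, e1, e2, e3, e4, f1, f2, Matrix.cons_val_two, Matrix.cons_val_three] <;>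
      exact mem_ray_self _

lemma exA3 : IsExtremalRay (coneOf ![e1, e3, f1, f2]) (ray f2) := by
  show IsExtremalRay (coneOf ![e1, e3, f1, f2]) (ray (![e1, e3, f1, f2] 3))
  refine extremal_of_normals ?_ ![1,-1,1] ![1,1,0] ?_ ?_ ?_ ?_ ?_
  · intro h
    have := congrFun h 0
    norm_num [e1, e2, e3, e4, f1, f2, Matrix.cons_val_two, Matrix.cons_val_three] at this
  · intro i; fin_cases i <;> norm_num [dotL_apply, e1, e2, e3, e4, f1, f2, Matrix.cons_val_two, Matrix.cons_val_three]
  · intro i; fin_cases i <;> norm_num [dotL_apply, e1, e2, e3, e4, f1, f2, Matrix.cons_val_two, Matrix.cons_val_three]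
  · norm_num [dotL_apply, e1, e2, e3, e4, f1, f2, Matrix.cons_val_two, Matrix.cons_val_three]
  · norm_num [dotL_apply, e1, e2, e3, e4, f1, f2, Matrix.cons_val_two, Matrix.cons_val_three]
  · intro i
    fin_cases i <;> norm_num [dotL_apply, e1, e2, e3, e4, f1, f2, Matrix.cons_val_two, Matrix.cons_val_three] <;>
      exact mem_ray_self _

lemma exB0 : IsExtremalRay (coneOf ![e2, e4, f1, f2]) (ray e2) := by
  show IsExtremalRay (coneOf ![e2, e4, f1, f2]) (ray (![e2, e4, f1, f2] 0))
  refine extremal_of_normals ?_ ![1,0,1] ![2,0,1] ?_ ?_ ?_ ?_ ?_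
  · intro h
    have := congrFun h 1
    norm_num [e1, e2, e3, e4, f1, f2, Matrix.cons_val_two, Matrix.cons_val_three] at this
  · intro i; fin_cases i <;> norm_num [dotL_apply, e1, e2, e3, e4, f1, f2, Matrix.cons_val_two, Matrix.cons_val_three]
  · intro i; fin_cases i <;> norm_num [dotL_apply, e1, e2, e3, e4, f1, f2, Matrix.cons_val_two, Matrix.cons_val_three]
  · norm_num [dotL_apply, e1, e2, e3, e4, f1, f2, Matrix.cons_val_two, Matrix.cons_val_three]
  · norm_num [dotL_apply, e1, e2, e3, e4, f1, f2, Matrix.cons_val_two, Matrix.cons_val_three]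
  · intro i
    fin_cases i <;> norm_num [dotL_apply, e1, e2, e3, e4, f1, f2, Matrix.cons_val_two, Matrix.cons_val_three] <;>
      exact mem_ray_self _

lemma exB1 : IsExtremalRay (coneOf ![e2, e4, f1, f2]) (ray e4) := by
  show IsExtremalRay (coneOf ![e2, e4, f1, f2]) (ray (![e2, e4, f1, f2] 1))
  refine extremal_of_normals ?_ ![1,0,1] ![1,1,2] ?_ ?_ ?_ ?_ ?_
  · intro h
    have := congrFun h 0
    norm_num [e1, e2, e3, e4, f1, f2, Matrix.cons_val_two, Matrix.cons_val_three] at this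
  · intro i; fin_cases i <;> norm_num [dotL_apply, e1, e2, e3, e4, f1, f2, Matrix.cons_val_two, Matrix.cons_val_three]
  · intro i; fin_cases i <;> norm_num [dotL_apply, e1, e2, e3, e4, f1, f2, Matrix.cons_val_two, Matrix.cons_val_three]
  · norm_num [dotL_apply, e1, e2, e3, e4, f1, f2, Matrix.cons_val_two, Matrix.cons_val_three]
  · norm_num [dotL_apply, e1, e2, e3, e4, f1, f2, Matrix.cons_val_two, Matrix.cons_val_three]
  · intro i
    fin_cases i <;> norm_num [dotL_apply, e1, e2, e3, e4, f1, f2, Matrix.cons_val_two, Matrix.cons_val_three] <;>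
      exact mem_ray_self _

lemma exB2 : IsExtremalRay (coneOf ![e2, e4, f1, f2]) (ray f1) := by
  show IsExtremalRay (coneOf ![e2, e4, f1, f2]) (ray (![e2, e4, f1, f2] 2))
  refine extremal_of_normals ?_ ![-1,1,-1] ![1,1,2] ?_ ?_ ?_ ?_ ?_
  · intro h
    have := congrFun h 0
    norm_num [e1, e2, e3, e4, f1, f2, Matrix.cons_val_two, Matrix.cons_val_three] at this
  · intro i; fin_cases i <;> norm_num [dotL_apply, e1, e2, e3, e4, f1, f2, Matrix.cons_val_two, Matrix.cons_val_three]
  · intro i; fin_cases i <;> norm_num [dotL_apply, e1, e2, e3, e4, f1, f2, Matrix.cons_val_two, Matrix.cons_val_three]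
  · norm_num [dotL_apply, e1, e2, e3, e4, f1, f2, Matrix.cons_val_two, Matrix.cons_val_three]
  · norm_num [dotL_apply, e1, e2, e3, e4, f1, f2, Matrix.cons_val_two, Matrix.cons_val_three]
  · intro i
    fin_cases i <;> norm_num [dotL_apply, e1, e2, e3, e4, f1, f2, Matrix.cons_val_two, Matrix.cons_val_three] <;>
      exact mem_ray_self _

lemma exB3 : IsExtremalRay (coneOf ![e2, e4, f1, f2]) (ray f2) := by
  show IsExtremalRay (coneOf ![e2, e4, f1, f2]) (ray (![e2, e4, f1, f2] 3))
  refine extremal_of_normals ?_ ![-1,1,-1] ![2,0,1] ?_ ?_ ?_ ?_ ?_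
  · intro h
    have := congrFun h 0
    norm_num [e1, e2, e3, e4, f1, f2, Matrix.cons_val_two, Matrix.cons_val_three] at this
  · intro i; fin_cases i <;> norm_num [dotL_apply, e1, e2, e3, e4, f1, f2, Matrix.cons_val_two, Matrix.cons_val_three]
  · intro i; fin_cases i <;> norm_num [dotL_apply, e1, e2, e3, e4, f1, f2, Matrix.cons_val_two, Matrix.cons_val_three]
  · norm_num [dotL_apply, e1, e2, e3, e4, f1, f2, Matrix.cons_val_two, Matrix.cons_val_three]
  · norm_num [dotL_apply, e1, e2, e3, e4, f1, f2, Matrix.cons_val_two, Matrix.cons_val_three]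
  · intro i
    fin_cases i <;> norm_num [dotL_apply, e1, e2, e3, e4, f1, f2, Matrix.cons_val_two, Matrix.cons_val_three] <;>
      exact mem_ray_self _

lemma r13 : ray e1 ≠ ray e3 := by
  apply ray_ne
  intro t ht h
  have h0 := congrFun h 0
  have h1 := congrFun h 1
  have h2 := congrFun h 2
  norm_num [e1, e2, e3, e4, f1, f2] at h0
  all_goals linarith

lemma r1f1 : ray e1 ≠ ray f1 := by
  apply ray_ne
  intro t ht h
  have h0 := congrFun h 0
  have h1 := congrFun h 1
  have h2 := congrFun h 2
  norm_num [e1, e2, e3, e4, f1, f2, Matrix.cons_val_two, Matrix.cons_val_three] at h0 h1 h2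
  all_goals linarith

lemma r1f2 : ray e1 ≠ ray f2 := by
  apply ray_ne
  intro t ht h
  have h0 := congrFun h 0
  have h1 := congrFun h 1
  have h2 := congrFun h 2
  norm_num [e1, e2, e3, e4, f1, f2, Matrix.cons_val_two, Matrix.cons_val_three] at h0 h1 h2
  all_goals linarith

lemma r3f1 : ray e3 ≠ ray f1 := by
  apply ray_ne
  intro t ht h
  have h0 := congrFun h 0
  have h1 := congrFun h 1
  have h2 := congrFun h 2
  norm_num [e1, e2, e3, e4, f1, f2, Matrix.cons_val_two, Matrix.cons_val_three] at h0 h1 h2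
  all_goals linarith

lemma r3f2 : ray e3 ≠ ray f2 := by
  apply ray_ne
  intro t ht h
  have h0 := congrFun h 0
  have h1 := congrFun h 1
  have h2 := congrFun h 2
  norm_num [e1, e2, e3, e4, f1, f2, Matrix.cons_val_two, Matrix.cons_val_three] at h0 h1 h2
  all_goals linarith

lemma rf12 : ray f1 ≠ ray f2 := by
  apply ray_ne
  intro t ht h
  have h0 := congrFun h 0
  have h1 := congrFun h 1
  have h2 := congrFun h 2
  norm_num [e1, e2, e3, e4, f1, f2, Matrix.cons_val_two, Matrix.cons_val_three] at h0 h1 h2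
  all_goals linarith

lemma r24 : ray e2 ≠ ray e4 := by
  apply ray_ne
  intro t ht h
  have h0 := congrFun h 0
  have h1 := congrFun h 1
  have h2 := congrFun h 2
  norm_num [e1, e2, e3, e4, f1, f2, Matrix.cons_val_two, Matrix.cons_val_three] at h0 h1 h2
  all_goals linarith

lemma r2f1 : ray e2 ≠ ray f1 := by
  apply ray_ne
  intro t ht h
  have h0 := congrFun h 0
  have h1 := congrFun h 1
  have h2 := congrFun h 2
  norm_num [e1, e2, e3, e4, f1, f2, Matrix.cons_val_two, Matrix.cons_val_three] at h0 h1 h2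
  all_goals linarith

lemma r2f2 : ray e2 ≠ ray f2 := by
  apply ray_ne
  intro t ht h
  have h0 := congrFun h 0
  have h1 := congrFun h 1
  have h2 := congrFun h 2
  norm_num [e1, e2, e3, e4, f1, f2, Matrix.cons_val_two, Matrix.cons_val_three] at h0 h1 h2
  all_goals linarith

lemma r4f1 : ray e4 ≠ ray f1 := by
  apply ray_ne
  intro t ht h
  have h0 := congrFun h 0
  have h1 := congrFun h 1
  have h2 := congrFun h 2
  norm_num [e1, e2, e3, e4, f1, f2, Matrix.cons_val_two, Matrix.cons_val_three] at h0 h1 h2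
  all_goals linarith

lemma r4f2 : ray e4 ≠ ray f2 := by
  apply ray_ne
  intro t ht h
  have h0 := congrFun h 0
  have h1 := congrFun h 1
  have h2 := congrFun h 2
  norm_num [e1, e2, e3, e4, f1, f2, Matrix.cons_val_two, Matrix.cons_val_three] at h0 h1 h2
  all_goals linarith

lemma hneA : ∀ j j' : Fin 4, ray (![e1, e3, f1, f2] j) = ray (![e1, e3, f1, f2] j') → j = j' := by
  intro j j' h
  fin_cases j <;> fin_cases j' <;>
    first
      | rfl
      | exact absurd h r13 | exact absurd h r13.symm
      | exact absurd h r1f1 | exact absurd h r1f1.symm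
      | exact absurd h r1f2 | exact absurd h r1f2.symm
      | exact absurd h r3f1 | exact absurd h r3f1.symm
      | exact absurd h r3f2 | exact absurd h r3f2.symm
      | exact absurd h rf12 | exact absurd h rf12.symm

lemma hneB : ∀ j j' : Fin 4, ray (![e2, e4, f1, f2] j) = ray (![e2, e4, f1, f2] j') → j = j' := by
  intro j j' h
  fin_cases j <;> fin_cases j' <;>
    first
      | rfl
      | exact absurd h r24 | exact absurd h r24.symm
      | exact absurd h r2f1 | exact absurd h r2f1.symm
      | exact absurd h r2f2 | exact absurd h r2f2.symm
      | exact absurd h r4f1 | exact absurd h r4f1.symm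
      | exact absurd h r4f2 | exact absurd h r4f2.symm
      | exact absurd h rf12 | exact absurd h rf12.symm

lemma hexA : ∀ j : Fin 4, IsExtremalRay (coneOf ![e1, e3, f1, f2]) (ray (![e1, e3, f1, f2] j)) := by
  intro j
  fin_cases j
  · exact exA0
  · exact exA1
  · exact exA2
  · exact exA3

lemma hexB : ∀ j : Fin 4, IsExtremalRay (coneOf ![e2, e4, f1, f2]) (ray (![e2, e4, f1, f2] j)) := by
  intro j
  fin_cases j
  · exact exB0
  · exact exB1
  · exact exB2
  · exact exB3

end Stmt15Aux

open Stmt15Aux in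
/-- neither maximal cone of `Δ_a` is simplicial, and each has
exactly four extremal rays, spanned by its four listed generators. -/
theorem stmt15 :
    ¬ IsSimplicial (coneOf ![e1, e3, f1, f2]) ∧
    ¬ IsSimplicial (coneOf ![e2, e4, f1, f2]) ∧
    {R | IsExtremalRay (coneOf ![e1, e3, f1, f2]) R} =
      {ray e1, ray e3, ray f1, ray f2} ∧
    List.Pairwise Ne [ray e1, ray e3, ray f1, ray f2] ∧
    {R | IsExtremalRay (coneOf ![e2, e4, f1, f2]) R} =
      {ray e2, ray e4, ray f1, ray f2} ∧
    List.Pairwise Ne [ray e2, ray e4, ray f1, ray f2] := by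
  refine ⟨not_simplicial hexA hneA, not_simplicial hexB hneB, ?_, ?_, ?_, ?_⟩
  · ext R
    simp only [Set.mem_setOf_eq, Set.mem_insert_iff, Set.mem_singleton_iff]
    constructor
    · intro hR
      obtain ⟨i, _, rfl⟩ := extremalRay_sub hR
      fin_cases i
      · exact Or.inl rfl
      · exact Or.inr (Or.inl rfl)
      · exact Or.inr (Or.inr (Or.inl rfl))
      · exact Or.inr (Or.inr (Or.inr rfl))
    · rintro (rfl | rfl | rfl | rfl)
      · exact exA0
      · exact exA1
      · exact exA2
      · exact exA3
  · simp only [List.pairwise_cons, List.mem_cons, List.not_mem_nil, List.mem_singleton, or_false]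
    exact ⟨fun x hx => by rcases hx with rfl | rfl | rfl; exacts [r13, r1f1, r1f2],
      fun x hx => by rcases hx with rfl | rfl; exacts [r3f1, r3f2],
      fun x hx => by rcases hx with rfl; exact rf12,
      fun x hx => hx.elim, List.Pairwise.nil⟩
  · ext R
    simp only [Set.mem_setOf_eq, Set.mem_insert_iff, Set.mem_singleton_iff]
    constructor
    · intro hR
      obtain ⟨i, _, rfl⟩ := extremalRay_sub hR
      fin_cases i
      · exact Or.inl rfl
      · exact Or.inr (Or.inl rfl)
      · exact Or.inr (Or.inr (Or.inl rfl))
      · exact Or.inr (Or.inr (Or.inr rfl))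
    · rintro (rfl | rfl | rfl | rfl)
      · exact exB0
      · exact exB1
      · exact exB2
      · exact exB3
  · simp only [List.pairwise_cons, List.mem_cons, List.not_mem_nil, List.mem_singleton, or_false]
    exact ⟨fun x hx => by rcases hx with rfl | rfl | rfl; exacts [r24, r2f1, r2f2],
      fun x hx => by rcases hx with rfl | rfl; exacts [r4f1, r4f2],
      fun x hx => by rcases hx with rfl; exact rf12,
      fun x hx => hx.elim, List.Pairwise.nil⟩
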